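/- Let Γ be an irreducible migration matrix of size n, let δ = (δ_1, …, δ_n) be a positive vector generating ker Γ, let r_i > 0, K_i > 0 and α_i = r_i/K_i for i = 1, …, n. Suppose that for each β > 0, x(β) ∈ ℝ^n is a positive equilibrium of the n-patch logistic system with migration rate β. Then, as β → +∞, x(β) converges to the point ((Σ_{i=1}^n δ_i r_i)/(Σ_{i=1}^n δ_i² α_i)) · (δ_1, …, δ_n). -/

import Mathlib

open Finset

set_option maxHeartbeats 1000000

/-- If for each β > 0, x(β) is a positive equilibrium of the n-patch
logistic system, then as β → +∞, x(β) converges to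
((Σ δ_i r_i)/(Σ δ_i² α_i)) · δ, where α_i = r_i/K_i. -/
theorem stmt_4 {n : ℕ} (hn : 0 < n) (Γ : Matrix (Fin n) (Fin n) ℝ)
    (hoff : ∀ i j : Fin n, i ≠ j → 0 ≤ Γ i j)
    (hdiag : ∀ i : Fin n, Γ i i = -∑ j ∈ univ.erase i, Γ j i)
    (hirr : ∀ i j : Fin n, i ≠ j → Relation.TransGen (fun a b : Fin n => 0 < Γ b a) i j)
    (δ r K : Fin n → ℝ) (hδ : ∀ i, 0 < δ i) (hδker : Γ.mulVec δ = 0)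
    (hgen : ∀ y : Fin n → ℝ, Γ.mulVec y = 0 → ∃ c : ℝ, y = c • δ)
    (hr : ∀ i, 0 < r i) (hK : ∀ i, 0 < K i)
    (x : ℝ → Fin n → ℝ)
    (hx : ∀ β : ℝ, 0 < β → (∀ i, 0 < x β i) ∧
      ∀ i, r i * x β i * (1 - x β i / K i)
        + β * ∑ j ∈ univ.erase i, (Γ i j * x β j - Γ j i * x β i) = 0) :
    Filter.Tendsto x Filter.atTop
      (nhds (((∑ i, δ i * r i) / (∑ i, δ i ^ 2 * (r i / K i))) • δ)) := by
  have hne : Nonempty (Fin n) := Fin.pos_iff_nonempty.mp hn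
  set A : ℝ := ∑ i, δ i * r i with hA
  set B : ℝ := ∑ i, δ i ^ 2 * (r i / K i) with hB
  have hApos : 0 < A := Finset.sum_pos (fun i _ => by have := hδ i; have := hr i; positivity)
    univ_nonempty
  have hBpos : 0 < B := Finset.sum_pos (fun i _ => by have := hδ i; have := hr i; have := hK i; positivity)
    univ_nonempty
  have hDpos : 0 < ∑ i, δ i ^ 2 := Finset.sum_pos (fun i _ => by have := hδ i; positivity)
    univ_nonempty
  -- Step 1: the weighted-sum identity ∑ r_i x_i (1 - x_i/K_i) = 0
  have h1 : ∀ β : ℝ, 0 < β → ∑ i, (r i * x β i - (r i / K i) * x β i ^ 2) = 0 := by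
    intro β hβ
    have heq := (hx β hβ).2
    have hsum0 : ∑ i, (r i * x β i * (1 - x β i / K i)
        + β * ∑ j ∈ univ.erase i, (Γ i j * x β j - Γ j i * x β i)) = 0 :=
      Finset.sum_eq_zero (fun i _ => heq i)
    have hz : ∑ i, ∑ j ∈ univ.erase i, (Γ i j * x β j - Γ j i * x β i) = 0 := by
      have herase : ∀ i : Fin n, ∑ j ∈ univ.erase i, (Γ i j * x β j - Γ j i * x β i)
          = ∑ j, (Γ i j * x β j - Γ j i * x β i) :=
        fun i => Finset.sum_erase _ (by ring)
      simp only [herase, Finset.sum_sub_distrib]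
      rw [Finset.sum_comm, sub_self]
    rw [Finset.sum_add_distrib, ← Finset.mul_sum, hz, mul_zero, add_zero] at hsum0
    rw [← hsum0]
    apply Finset.sum_congr rfl
    intro i _
    have := (hK i).ne'
    field_simp
  -- Step 2: equation in mulVec form
  have h2 : ∀ β : ℝ, 0 < β → ∀ i, r i * x β i * (1 - x β i / K i) + β * Γ.mulVec (x β) i = 0 := by
    intro β hβ i
    have heq := (hx β hβ).2 i
    have hmv : Γ.mulVec (x β) i = ∑ j ∈ univ.erase i, (Γ i j * x β j - Γ j i * x β i) := by
      have hstep : Γ.mulVec (x β) i = Γ i i * x β i + ∑ j ∈ univ.erase i, Γ i j * x β j := by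
        rw [Matrix.mulVec, dotProduct]
        exact (Finset.add_sum_erase _ _ (Finset.mem_univ i)).symm
      rw [hstep, hdiag i, Finset.sum_sub_distrib, ← Finset.sum_mul]
      ring
    rw [hmv]
    exact heq
  -- Step 3: uniform bound
  have hrsum : 0 < ∑ k, r k := Finset.sum_pos (fun k _ => hr k) univ_nonempty
  obtain ⟨M, hM0, hM⟩ : ∃ M : ℝ, 0 < M ∧ ∀ β : ℝ, 0 < β → ∀ i, x β i ≤ M := by
    refine ⟨∑ j, (∑ k, r k) * (K j / r j),
      Finset.sum_pos (fun j _ => by have := hr j; have := hK j; positivity) univ_nonempty, ?_⟩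
    intro β hβ i
    obtain ⟨hpos, -⟩ := hx β hβ
    obtain ⟨i0, hi0⟩ := Finite.exists_max (x β)
    have hsq : (r i0 / K i0) * x β i0 ^ 2 ≤ ∑ j, (r j / K j) * x β j ^ 2 :=
      Finset.single_le_sum (f := fun j => (r j / K j) * x β j ^ 2)
        (fun j _ => by have := hr j; have := hK j; have := hpos j; positivity)
        (Finset.mem_univ i0)
    have hs1 : ∑ j, (r j / K j) * x β j ^ 2 = ∑ j, r j * x β j := by
      have h' := h1 β hβ
      rw [Finset.sum_sub_distrib, sub_eq_zero] at h'
      exact h'.symm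
    have hs2 : ∑ j, r j * x β j ≤ (∑ k, r k) * x β i0 := by
      rw [Finset.sum_mul]
      exact Finset.sum_le_sum (fun j _ => mul_le_mul_of_nonneg_left (hi0 j) (hr j).le)
    have key : (r i0 / K i0) * x β i0 ^ 2 ≤ (∑ k, r k) * x β i0 := by
      rw [hs1] at hsq; exact hsq.trans hs2
    have hri0 := hr i0
    have hKi0 := hK i0
    have hp := hpos i0
    have hdm : r i0 / K i0 * K i0 = r i0 := div_mul_cancel₀ _ hKi0.ne'
    have key2 : r i0 * x β i0 ≤ (∑ k, r k) * K i0 := by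
      nlinarith [mul_le_mul_of_nonneg_right key hKi0.le]
    have hx0 : x β i0 ≤ (∑ k, r k) * (K i0 / r i0) := by
      rw [mul_div_assoc'] at *
      rw [le_div_iff₀ hri0]
      linarith [key2]
    calc x β i ≤ x β i0 := hi0 i
    _ ≤ (∑ k, r k) * (K i0 / r i0) := hx0
    _ ≤ ∑ j, (∑ k, r k) * (K j / r j) :=
      Finset.single_le_sum (f := fun j => (∑ k, r k) * (K j / r j))
        (fun j _ => by have := hr j; have := hK j; positivity) (Finset.mem_univ i0)
  -- Step 4: Γ x → 0
  have h4 : Filter.Tendsto (fun β => Γ.mulVec (x β)) Filter.atTop (nhds 0) := by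
    rw [tendsto_pi_nhds]
    intro i
    have h0 : (0 : Fin n → ℝ) i = 0 := rfl
    rw [h0]
    apply squeeze_zero_norm' (a := fun β => (r i * M + r i / K i * M ^ 2) / β)
    · filter_upwards [Filter.eventually_gt_atTop 0] with β hβ
      have heq := h2 β hβ i
      obtain ⟨hpos, -⟩ := hx β hβ
      have hid : r i * x β i * (1 - x β i / K i) = r i * x β i - r i / K i * x β i ^ 2 := by
        have := (hK i).ne'
        field_simp
      have hv : Γ.mulVec (x β) i = -(r i * x β i - r i / K i * x β i ^ 2) / β := by
        rw [← hid]
        field_simp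
        linarith [heq]
      rw [hv, Real.norm_eq_abs, abs_div, abs_of_pos hβ, abs_neg]
      have hq : (0:ℝ) ≤ r i / K i := by have := hr i; have := hK i; positivity
      have hb : |r i * x β i - r i / K i * x β i ^ 2| ≤ r i * M + r i / K i * M ^ 2 := by
        rw [abs_le]
        have hxM := hM β hβ i
        have hxp := hpos i
        have hri := hr i
        have hsq : x β i ^ 2 ≤ M ^ 2 := by nlinarith
        constructor
        · nlinarith [mul_le_mul_of_nonneg_left hsq hq]
        · nlinarith [mul_le_mul_of_nonneg_left hsq hq]
      gcongr
    · exact tendsto_const_nhds.div_atTop Filter.tendsto_id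
  -- Step 5: antilipschitz
  obtain ⟨C, hC0, hC⟩ : ∃ C : ℝ, 0 < C ∧ ∀ y : Fin n → ℝ,
      (∑ i, δ i * y i) = 0 → ‖y‖ ≤ C * ‖Γ.mulVec y‖ := by
    classical
    let ℓ : (Fin n → ℝ) →ₗ[ℝ] ℝ :=
      { toFun := fun y => ∑ i, δ i * y i
        map_add' := fun a b => by
          simp [mul_add, Finset.sum_add_distrib]
        map_smul' := fun t a => by
          simp only [Pi.smul_apply, smul_eq_mul, RingHom.id_apply, Finset.mul_sum]
          exact Finset.sum_congr rfl (fun i _ => by ring) }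
    let F : (Fin n → ℝ) →ₗ[ℝ] ((Fin n → ℝ) × ℝ) := (Matrix.mulVecLin Γ).prod ℓ
    have hker : LinearMap.ker F = ⊥ := by
      rw [LinearMap.ker_eq_bot']
      intro y hy
      have hy1 : Γ.mulVec y = 0 := congrArg Prod.fst hy
      have hy2 : ∑ i, δ i * y i = 0 := congrArg Prod.snd hy
      obtain ⟨t, rfl⟩ := hgen y hy1
      have ht0 : t * ∑ i, δ i ^ 2 = 0 := by
        rw [← hy2, Finset.mul_sum]
        exact Finset.sum_congr rfl (fun i _ => by
          simp only [Pi.smul_apply, smul_eq_mul]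
          ring)
      rcases mul_eq_zero.mp ht0 with h | h
      · simp [h]
      · exact absurd h hDpos.ne'
    obtain ⟨Knn, hK1, hK2⟩ := LinearMap.exists_antilipschitzWith F hker
    refine ⟨(Knn : ℝ) + 1, by positivity, ?_⟩
    intro y hy
    have hdist := hK2.le_mul_dist y 0
    rw [dist_zero_right, map_zero, dist_zero_right] at hdist
    have hFy : ‖F y‖ = ‖Γ.mulVec y‖ := by
      have hFyeq : F y = (Γ.mulVec y, (0 : ℝ)) := by
        have : ℓ y = 0 := hy
        simp [F, Matrix.mulVecLin_apply, this]
      rw [hFyeq, Prod.norm_def]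
      simp
    rw [hFy] at hdist
    calc ‖y‖ ≤ (Knn : ℝ) * ‖Γ.mulVec y‖ := hdist
    _ ≤ ((Knn : ℝ) + 1) * ‖Γ.mulVec y‖ := by nlinarith [norm_nonneg (Γ.mulVec y)]
  -- decomposition
  set c : ℝ → ℝ := fun β => (∑ i, δ i * x β i) / (∑ i, δ i ^ 2) with hcdef
  set E : ℝ → Fin n → ℝ := fun β => x β - c β • δ with hEdef
  have hE0 : Filter.Tendsto E Filter.atTop (nhds 0) := by
    apply squeeze_zero_norm' (a := fun β => C * ‖Γ.mulVec (x β)‖)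
    · filter_upwards [Filter.eventually_gt_atTop 0] with β hβ
      have hℓ : ∑ i, δ i * E β i = 0 := by
        have hexp : ∑ i, δ i * E β i = (∑ i, δ i * x β i) - c β * ∑ i, δ i ^ 2 := by
          rw [Finset.mul_sum, ← Finset.sum_sub_distrib]
          exact Finset.sum_congr rfl (fun i _ => by
            simp only [hEdef, Pi.sub_apply, Pi.smul_apply, smul_eq_mul]
            ring)
        rw [hexp, hcdef]
        field_simp
        ring
      have hGE : Γ.mulVec (E β) = Γ.mulVec (x β) := by
        simp only [hEdef]
        rw [Matrix.mulVec_sub, Matrix.mulVec_smul, hδker]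
        simp
      have := hC (E β) hℓ
      rw [hGE] at this
      exact this
    · have h' := (h4.norm).const_mul C
      simpa using h'
  have hcpos : ∀ β : ℝ, 0 < β → 0 < c β := by
    intro β hβ
    have := (hx β hβ).1
    exact div_pos (Finset.sum_pos (fun i _ => mul_pos (hδ i) (this i)) univ_nonempty) hDpos
  set cmax : ℝ := (∑ i, δ i) * M / (∑ i, δ i ^ 2) with hcmax
  have hcle : ∀ β : ℝ, 0 < β → c β ≤ cmax := by
    intro β hβ
    have h := (hx β hβ).1
    have hsum : (∑ i, δ i * x β i) ≤ (∑ i, δ i) * M := by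
      rw [Finset.sum_mul]
      exact Finset.sum_le_sum (fun i _ => mul_le_mul_of_nonneg_left (hM β hβ i) (hδ i).le)
    show (∑ i, δ i * x β i) / (∑ i, δ i ^ 2) ≤ (∑ i, δ i) * M / (∑ i, δ i ^ 2)
    gcongr
  -- eventual lower bound on c
  obtain ⟨m, hm0, hmc⟩ : ∃ m : ℝ, 0 < m ∧ ∀ᶠ β in Filter.atTop, m ≤ c β := by
    obtain ⟨i₀, hi₀⟩ := Finite.exists_min K
    obtain ⟨j₀, hj₀⟩ := Finite.exists_max δ
    have hKi₀ := hK i₀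
    have hδj₀ := hδ j₀
    refine ⟨K i₀ / (2 * δ j₀), by positivity, ?_⟩
    have hev : ∀ᶠ β in Filter.atTop, ‖E β‖ < K i₀ / 2 :=
      (NormedAddCommGroup.tendsto_nhds_zero.mp hE0) _ (by positivity)
    filter_upwards [hev, Filter.eventually_gt_atTop 0] with β hEβ hβ
    obtain ⟨hpos, -⟩ := hx β hβ
    have hex : ∃ i, K i ≤ x β i := by
      by_contra hcon
      push_neg at hcon
      have hppos : 0 < ∑ i, (r i * x β i - r i / K i * x β i ^ 2) := by
        refine Finset.sum_pos (fun i _ => ?_) univ_nonempty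
        have hri := hr i
        have hKi := hK i
        have hxi := hpos i
        have hq : (0:ℝ) < r i / K i := by positivity
        have hfac : r i * x β i - r i / K i * x β i ^ 2
            = (r i / K i) * x β i * (K i - x β i) := by
          field_simp
        rw [hfac]
        exact mul_pos (mul_pos hq hxi) (sub_pos.mpr (hcon i))
      rw [h1 β hβ] at hppos
      exact lt_irrefl 0 hppos
    obtain ⟨i, hi⟩ := hex
    have hEi : |E β i| < K i₀ / 2 := by
      have h8 := norm_le_pi_norm (E β) i
      rw [Real.norm_eq_abs] at h8
      exact lt_of_le_of_lt h8 hEβ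
    have hxi : x β i = c β * δ i + E β i := by
      simp only [hEdef, Pi.sub_apply, Pi.smul_apply, smul_eq_mul]
      ring
    have h5 : K i₀ / 2 ≤ c β * δ i := by
      have h6 := hi₀ i
      have h7 := abs_lt.mp hEi
      rw [hxi] at hi
      linarith [h7.1, h7.2]
    have hδj : δ i ≤ δ j₀ := hj₀ i
    have hc0 := hcpos β hβ
    rw [div_le_iff₀ (by positivity)]
    nlinarith [mul_le_mul_of_nonneg_left hδj hc0.le]
  -- the quadratic identity
  have hgid : ∀ β : ℝ, 0 < β → c β * (c β * B - A)
      = ∑ i, (r i * E β i - r i / K i * E β i * (x β i + c β * δ i)) := by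
    intro β hβ
    have h1β := h1 β hβ
    have hcB : c β * (c β * B - A)
        = ∑ i, (c β * (c β * (δ i ^ 2 * (r i / K i))) - c β * (δ i * r i)) := by
      rw [hB, hA, mul_sub, Finset.mul_sum, Finset.mul_sum, Finset.mul_sum,
        ← Finset.sum_sub_distrib]
    have hkey : (∑ i, (r i * E β i - r i / K i * E β i * (x β i + c β * δ i)))
        - (∑ i, (c β * (c β * (δ i ^ 2 * (r i / K i))) - c β * (δ i * r i)))
        = ∑ i, (r i * x β i - r i / K i * x β i ^ 2) := by
      rw [← Finset.sum_sub_distrib]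
      refine Finset.sum_congr rfl (fun i _ => ?_)
      have hEi : E β i = x β i - c β * δ i := by
        simp only [hEdef, Pi.sub_apply, Pi.smul_apply, smul_eq_mul]
      rw [hEi]
      ring
    rw [h1β] at hkey
    rw [hcB]
    linarith [hkey]
  have hcmax0 : (0:ℝ) ≤ cmax := by
    rw [hcmax]
    have : (0:ℝ) ≤ ∑ i, δ i := Finset.sum_nonneg (fun i _ => (hδ i).le)
    positivity
  have hg : Filter.Tendsto (fun β => c β * (c β * B - A)) Filter.atTop (nhds 0) := by
    set Cg : ℝ := ∑ i, (r i + r i / K i * (M + cmax * δ i)) with hCgdef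
    apply squeeze_zero_norm' (a := fun β => Cg * ‖E β‖)
    · filter_upwards [Filter.eventually_gt_atTop 0] with β hβ
      rw [Real.norm_eq_abs, hgid β hβ]
      obtain ⟨hpos, -⟩ := hx β hβ
      calc |∑ i, (r i * E β i - r i / K i * E β i * (x β i + c β * δ i))|
          ≤ ∑ i, |r i * E β i - r i / K i * E β i * (x β i + c β * δ i)| :=
            Finset.abs_sum_le_sum_abs _ _
      _ ≤ ∑ i, (r i + r i / K i * (M + cmax * δ i)) * ‖E β‖ := by
            refine Finset.sum_le_sum (fun i _ => ?_)
            have hEi : |E β i| ≤ ‖E β‖ := by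
              have h8 := norm_le_pi_norm (E β) i
              rwa [Real.norm_eq_abs] at h8
            have hri := hr i
            have hKi := hK i
            have hxi := hpos i
            have hxM := hM β hβ i
            have hδi := hδ i
            have hcβ := hcpos β hβ
            have hcm := hcle β hβ
            have hq : (0:ℝ) ≤ r i / K i := by positivity
            have hfac : r i * E β i - r i / K i * E β i * (x β i + c β * δ i)
                = (r i - r i / K i * (x β i + c β * δ i)) * E β i := by ring
            rw [hfac, abs_mul]
            have hs : (0:ℝ) < x β i + c β * δ i := by positivity
            have h9 : |r i - r i / K i * (x β i + c β * δ i)|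
                ≤ r i + r i / K i * (x β i + c β * δ i) := by
              rw [abs_le]
              constructor
              · nlinarith [mul_nonneg hq hs.le]
              · nlinarith [mul_nonneg hq hs.le]
            have h10 : r i + r i / K i * (x β i + c β * δ i)
                ≤ r i + r i / K i * (M + cmax * δ i) := by
              have : x β i + c β * δ i ≤ M + cmax * δ i := by
                have := mul_le_mul_of_nonneg_right hcm hδi.le
                linarith
              nlinarith [mul_le_mul_of_nonneg_left this hq]
            calc |r i - r i / K i * (x β i + c β * δ i)| * |E β i|
                ≤ (r i + r i / K i * (x β i + c β * δ i)) * |E β i| :=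
                  mul_le_mul_of_nonneg_right h9 (abs_nonneg _)
            _ ≤ (r i + r i / K i * (M + cmax * δ i)) * ‖E β‖ := by
                  apply mul_le_mul h10 hEi (abs_nonneg _)
                  positivity
      _ = Cg * ‖E β‖ := by rw [hCgdef, Finset.sum_mul]
    · have h' := (hE0.norm).const_mul Cg
      simpa using h'
  have h8 : Filter.Tendsto (fun β => c β * B - A) Filter.atTop (nhds 0) := by
    apply squeeze_zero_norm' (a := fun β => (1/m) * |c β * (c β * B - A)|)
    · filter_upwards [hmc, Filter.eventually_gt_atTop 0] with β hmβ hβ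
      rw [Real.norm_eq_abs]
      have h' : |c β * (c β * B - A)| = c β * |c β * B - A| := by
        rw [abs_mul, abs_of_pos (hcpos β hβ)]
      rw [h']
      have h2' : m * |c β * B - A| ≤ c β * |c β * B - A| :=
        mul_le_mul_of_nonneg_right hmβ (abs_nonneg _)
      calc |c β * B - A| = (1/m) * (m * |c β * B - A|) := by field_simp
      _ ≤ (1/m) * (c β * |c β * B - A|) :=
        mul_le_mul_of_nonneg_left h2' (by positivity)
    · have h' := (hg.abs).const_mul (1/m)
      simpa using h'
  have h9 : Filter.Tendsto c Filter.atTop (nhds (A / B)) := by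
    have : c = fun β => ((c β * B - A) + A) / B := by
      funext β; field_simp; ring
    rw [this]
    have := (h8.add_const A).div_const B
    simpa using this
  have hx' : x = fun β => c β • δ + E β := by
    funext β; simp [hEdef]
  rw [hx']
  have := (h9.smul_const δ).add hE0
  simpa using this
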